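/- arXiv:0904.2306 — 4 statements merged into one kernel-verified Lean document; each statement's English description precedes it below -/
import Mathlib

section
/- Let G(V,E) be a finite simple directed graph in which every vertex has positive indegree and let k be a positive integer. Then there exists a set S ⊆ V with c(S, G, φ_{k/(k+1)}) = V and |S| ≤ (k/(k+1))·|V|. -/
/-- The set of in-neighbors of `v` in the directed graph with adjacency
relation `A` (`A u v` means there is an edge from `u` to `v`). -/
def inNbr {V : Type*} (A : V → V → Prop) (v : V) : Set V := {u | A u v}

/-- `dClosure A ok S` is the least superset of `S` closed under the coloring
rule: a vertex `v` gets colored white as soon as the number `n` of its white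
in-neighbors satisfies the threshold condition `ok v n`. -/
def dClosure {V : Type*} (A : V → V → Prop) (ok : V → ℕ → Prop) (S : Set V) : Set V :=
  ⋂₀ {T : Set V | S ⊆ T ∧ ∀ v, ok v ((inNbr A v ∩ T).ncard) → v ∈ T}

/-- The threshold rule `φ_{k/(k+1)}`: `v` is colored white when at least
`(k/(k+1)) · deg^in(v)` of its in-neighbors are white,
i.e. `k · deg^in(v) ≤ (k+1) · n`. -/
def fracOk {V : Type*} (A : V → V → Prop) (k : ℕ) (v : V) (n : ℕ) : Prop :=
  k * (inNbr A v).ncard ≤ (k + 1) * n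


open Finset

section auxlem
variable {α : Type*} [LinearOrder α] [DecidableEq α]

lemma countBelow {s : Finset α} {m : ℕ} (h : s.card = m) (i : Fin m) :
    (s.filter (fun z => z < s.orderEmbOfFin h i)).card = i := by
  have hinj : Function.Injective (s.orderEmbOfFin h) := (s.orderEmbOfFin h).injective
  have himg : s.filter (fun z => z < s.orderEmbOfFin h i)
      = (Finset.univ.filter (fun j : Fin m => j < i)).image (s.orderEmbOfFin h) := by
    ext z
    simp only [mem_filter, mem_image, Finset.mem_univ, true_and]
    constructor
    · rintro ⟨hz, hlt⟩
      have : z ∈ Set.range (s.orderEmbOfFin h) := by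
        rw [Finset.range_orderEmbOfFin]; exact hz
      obtain ⟨j, rfl⟩ := this
      exact ⟨j, (s.orderEmbOfFin h).lt_iff_lt.1 hlt, rfl⟩
    · rintro ⟨j, hj, rfl⟩
      exact ⟨Finset.orderEmbOfFin_mem s h j, (s.orderEmbOfFin h).lt_iff_lt.2 hj⟩
  rw [himg, Finset.card_image_of_injective _ hinj]
  have : Finset.univ.filter (fun j : Fin m => j < i) = Finset.Iio i := by
    ext j; simp
  rw [this, Fin.card_Iio]

end auxlem
section auxlem2
variable {α : Type*} [LinearOrder α] [DecidableEq α]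

lemma eq_orderEmbOfFin {s : Finset α} {m : ℕ} (h : s.card = m) {x : α} (hx : x ∈ s)
    (i : Fin m) (hc : (s.filter (fun z => z < x)).card = i) : x = s.orderEmbOfFin h i := by
  have : x ∈ Set.range (s.orderEmbOfFin h) := by rw [Finset.range_orderEmbOfFin]; exact hx
  obtain ⟨j, rfl⟩ := this
  have := countBelow h j
  have hji : j = i := Fin.ext (by rw [← this, hc])
  rw [hji]

lemma rank_lt_card {s : Finset α} {x : α} (hx : x ∈ s) :
    (s.filter (fun z => z < x)).card < s.card := by
  have hsub : s.filter (fun z => z < x) ⊆ s.erase x := by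
    intro z hz
    rw [Finset.mem_filter] at hz
    exact Finset.mem_erase.2 ⟨ne_of_lt hz.2, hz.1⟩
  calc (s.filter (fun z => z < x)).card ≤ (s.erase x).card := Finset.card_le_card hsub
    _ < s.card := Finset.card_erase_lt_of_mem hx

lemma swap_image {a b : α} {t : Finset α} (ha : a ∈ t) (hb : b ∈ t) :
    t.image (Equiv.swap a b) = t := by
  ext z
  simp only [Finset.mem_image]
  constructor
  · rintro ⟨w, hw, rfl⟩
    rcases eq_or_ne w a with rfl | hwa
    · simpa [Equiv.swap_apply_left]
    rcases eq_or_ne w b with rfl | hwb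
    · simpa [Equiv.swap_apply_right]
    · rwa [Equiv.swap_apply_of_ne_of_ne hwa hwb]
  · intro hz
    refine ⟨Equiv.swap a b z, ?_, by simp⟩
    rcases eq_or_ne z a with rfl | hza
    · simpa [Equiv.swap_apply_left]
    rcases eq_or_ne z b with rfl | hzb
    · simpa [Equiv.swap_apply_right]
    · rwa [Equiv.swap_apply_of_ne_of_ne hza hzb]

end auxlem2
section count
variable {V : Type*} [Fintype V] [DecidableEq V] {m : ℕ}

lemma card_image_equiv (P : Finset V) (hP : P.card = m) (f : V ≃ Fin (Fintype.card V)) :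
    (P.image f).card = m := by
  rw [Finset.card_image_of_injective _ f.injective, hP]

/-- number of elements of `P` mapped below `v` -/
def rk (P : Finset V) (v : V) (f : V ≃ Fin (Fintype.card V)) : ℕ :=
  ((P.image f).filter (fun z => z < f v)).card

/-- the element of `f '' P` of rank `j` -/
noncomputable def el (P : Finset V) (hP : P.card = m) (f : V ≃ Fin (Fintype.card V))
    (j : Fin m) : Fin (Fintype.card V) :=
  (P.image f).orderEmbOfFin (card_image_equiv P hP f) j

/-- swap the position of `v` with the rank-`j` position -/
noncomputable def F (P : Finset V) (v : V) (hP : P.card = m) (f : V ≃ Fin (Fintype.card V))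
    (j : Fin m) : V ≃ Fin (Fintype.card V) :=
  f.trans (Equiv.swap (f v) (el P hP f j))

lemma image_F (P : Finset V) (v : V) (hv : v ∈ P) (hP : P.card = m)
    (f : V ≃ Fin (Fintype.card V)) (j : Fin m) :
    P.image (F P v hP f j) = P.image f := by
  have : P.image (F P v hP f j) = (P.image f).image (Equiv.swap (f v) (el P hP f j)) := by
    rw [Finset.image_image]; rfl
  rw [this]
  exact swap_image (Finset.mem_image_of_mem f hv)
    (Finset.orderEmbOfFin_mem _ (card_image_equiv P hP f) j)

lemma F_apply_v (P : Finset V) (v : V) (hP : P.card = m)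
    (f : V ≃ Fin (Fintype.card V)) (j : Fin m) :
    (F P v hP f j) v = el P hP f j := by
  show Equiv.swap (f v) (el P hP f j) (f v) = _
  exact Equiv.swap_apply_left _ _

lemma rk_F (P : Finset V) (v : V) (hv : v ∈ P) (hP : P.card = m)
    (f : V ≃ Fin (Fintype.card V)) (j : Fin m) :
    rk P v (F P v hP f j) = j := by
  unfold rk
  rw [image_F P v hv hP, F_apply_v]
  exact countBelow (card_image_equiv P hP f) j

lemma el_F (P : Finset V) (v : V) (hv : v ∈ P) (hP : P.card = m)
    (f : V ≃ Fin (Fintype.card V)) (j : Fin m) (r : Fin m) (hf : rk P v f = r) :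
    el P hP (F P v hP f j) r = f v := by
  refine (eq_orderEmbOfFin _ ?_ r ?_).symm
  · rw [image_F P v hv hP]; exact Finset.mem_image_of_mem f hv
  · rw [image_F P v hv hP]; exact hf

lemma F_F (P : Finset V) (v : V) (hv : v ∈ P) (hP : P.card = m)
    (f : V ≃ Fin (Fintype.card V)) (j : Fin m) (r : Fin m) (hf : rk P v f = r) :
    F P v hP (F P v hP f j) r = f := by
  have h1 : F P v hP (F P v hP f j) r
      = (F P v hP f j).trans (Equiv.swap ((F P v hP f j) v) (el P hP (F P v hP f j) r)) := rfl
  rw [h1, F_apply_v, el_F P v hv hP f j r hf, Equiv.swap_comm]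
  show (f.trans _).trans _ = f
  rw [Equiv.trans_assoc, Equiv.swap_swap, Equiv.trans_refl]

end count
section count2
variable {V : Type*} [Fintype V] [DecidableEq V]

lemma rk_eq (P : Finset V) (v : V) (f : V ≃ Fin (Fintype.card V)) :
    rk P v f = (P.filter (fun u => f u < f v)).card := by
  unfold rk
  rw [Finset.filter_image]
  exact Finset.card_image_of_injective _ f.injective

lemma cnt_eq {d : ℕ} (P : Finset V) (v : V) (hv : v ∈ P) (hP : P.card = d + 1)
    (r r' : Fin (d + 1)) :
    (Finset.univ.filter (fun f : V ≃ Fin (Fintype.card V) => rk P v f = r)).card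
    = (Finset.univ.filter (fun f : V ≃ Fin (Fintype.card V) => rk P v f = r')).card := by
  refine Finset.card_bij' (fun f _ => F P v hP f r') (fun f _ => F P v hP f r) ?_ ?_ ?_ ?_ <;>
    intro f hf <;> simp only [Finset.mem_filter, Finset.mem_univ, true_and] at hf ⊢
  · exact rk_F P v hv hP f r'
  · exact rk_F P v hv hP f r
  · exact F_F P v hv hP f r' r hf
  · exact F_F P v hv hP f r r' hf

lemma vertex_count {d : ℕ} (P : Finset V) (v : V) (hv : v ∈ P) (hP : P.card = d + 1) (k : ℕ) :
    (k + 1) * (Finset.univ.filter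
        (fun f : V ≃ Fin (Fintype.card V) => (k + 1) * rk P v f < k * d)).card
      ≤ k * (Finset.univ : Finset (V ≃ Fin (Fintype.card V))).card := by
  classical
  set c := (Finset.univ.filter
      (fun f : V ≃ Fin (Fintype.card V) => rk P v f = 0)).card with hc
  have hrk_lt : ∀ f : V ≃ Fin (Fintype.card V), rk P v f < d + 1 := by
    intro f
    have := rank_lt_card (Finset.mem_image_of_mem f hv)
    rwa [card_image_equiv P hP f] at this
  have fiber_eq : ∀ r : ℕ, r < d + 1 →
      (Finset.univ.filter (fun f : V ≃ Fin (Fintype.card V) => rk P v f = r)).card = c := by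
    intro r hr
    have := cnt_eq P v hv hP ⟨r, hr⟩ ⟨0, Nat.succ_pos d⟩
    simpa using this
  have htotal : (Finset.univ : Finset (V ≃ Fin (Fintype.card V))).card = (d + 1) * c := by
    rw [Finset.card_eq_sum_card_fiberwise
      (f := fun f : V ≃ Fin (Fintype.card V) => rk P v f) (t := Finset.range (d + 1))
      (fun f _ => Finset.mem_range.2 (hrk_lt f))]
    rw [Finset.sum_congr rfl (fun r hr => fiber_eq r (Finset.mem_range.1 hr))]
    simp [mul_comm]
  set filt := (Finset.range (d + 1)).filter (fun r => (k + 1) * r < k * d) with hfilt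
  have hgood : (Finset.univ.filter
      (fun f : V ≃ Fin (Fintype.card V) => (k + 1) * rk P v f < k * d)).card
      = filt.card * c := by
    rw [Finset.card_eq_sum_card_fiberwise
      (f := fun f : V ≃ Fin (Fintype.card V) => rk P v f) (t := filt)
      (fun f hf => by
        simp only [Finset.mem_coe, Finset.coe_filter, Set.mem_setOf_eq, Finset.mem_filter, Finset.mem_univ, true_and] at hf
        exact Finset.mem_filter.2 ⟨Finset.mem_range.2 (hrk_lt f), hf⟩)]
    rw [Finset.sum_congr rfl (fun r hr => ?_), Finset.sum_const, smul_eq_mul]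
    have hr := Finset.mem_filter.1 hr
    rw [Finset.filter_filter]
    have heq : (Finset.univ.filter (fun f : V ≃ Fin (Fintype.card V) =>
        (k + 1) * rk P v f < k * d ∧ rk P v f = r))
        = Finset.univ.filter (fun f => rk P v f = r) := by
      ext f
      simp only [Finset.mem_filter, Finset.mem_univ, true_and]
      exact ⟨fun h => h.2, fun h => ⟨by rw [h]; exact hr.2, h⟩⟩
    rw [heq]
    exact fiber_eq r (Finset.mem_range.1 hr.1)
  have hfc : filt.card ≤ (k * d + k) / (k + 1) := by
    have : filt ⊆ Finset.range ((k * d + k) / (k + 1)) := by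
      intro r hr
      have hr := (Finset.mem_filter.1 hr).2
      rw [Finset.mem_range]
      have h1 : r + 1 ≤ (k * d + k) / (k + 1) := by
        rw [Nat.le_div_iff_mul_le (Nat.succ_pos k)]
        nlinarith [hr]
      omega
    simpa using Finset.card_le_card this
  calc (k + 1) * (Finset.univ.filter
        (fun f : V ≃ Fin (Fintype.card V) => (k + 1) * rk P v f < k * d)).card
      = (k + 1) * (filt.card * c) := by rw [hgood]
    _ ≤ (k + 1) * (((k * d + k) / (k + 1)) * c) :=
        Nat.mul_le_mul_left _ (Nat.mul_le_mul_right _ hfc)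
    _ = (((k * d + k) / (k + 1)) * (k + 1)) * c := by ring
    _ ≤ (k * d + k) * c :=
        Nat.mul_le_mul_right _ (Nat.div_mul_le_self _ _)
    _ = k * ((d + 1) * c) := by ring
    _ = k * (Finset.univ : Finset (V ≃ Fin (Fintype.card V))).card := by rw [htotal]

end count2

lemma dClosure_closed {V : Type*} [Fintype V] (A : V → V → Prop) (k : ℕ) (S : Set V) :
    S ⊆ dClosure A (fracOk A k) S ∧
      ∀ v, fracOk A k v ((inNbr A v ∩ dClosure A (fracOk A k) S).ncard)
        → v ∈ dClosure A (fracOk A k) S := by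
  constructor
  · exact Set.subset_sInter (fun T hT => hT.1)
  · intro v hv
    apply Set.mem_sInter.2
    intro T hT
    apply hT.2 v
    unfold fracOk at hv ⊢
    refine le_trans hv (Nat.mul_le_mul_left _ (Set.ncard_le_ncard ?_ (Set.toFinite _)))
    exact Set.inter_subset_inter_right _ (Set.sInter_subset_of_mem hT)


/-- Theorem: every finite digraph with positive indegrees has a seed set `S`
with `c(S, G, φ_{k/(k+1)}) = V` and `|S| ≤ (k/(k+1))·|V|`
(expressed as `(k+1)·|S| ≤ k·|V|`). -/
theorem stmt2 {V : Type*} [Fintype V] (A : V → V → Prop)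
    (hsimple : ∀ v, ¬ A v v) (hindeg : ∀ v : V, ∃ u, A u v)
    (k : ℕ) (hk : 0 < k) :
    ∃ S : Set V, dClosure A (fracOk A k) S = Set.univ ∧
      (k + 1) * S.ncard ≤ k * Fintype.card V := by
  classical
  set n := Fintype.card V with hn
  set N : V → Finset V := fun v => Finset.univ.filter (fun u => A u v) with hN
  set d : V → ℕ := fun v => (N v).card with hd
  set P : V → Finset V := fun v => insert v (N v) with hP
  have hvP : ∀ v, v ∈ P v := fun v => Finset.mem_insert_self v _
  have hPcard : ∀ v, (P v).card = d v + 1 := by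
    intro v
    rw [hP]
    rw [Finset.card_insert_of_notMem]
    simp only [hN, Finset.mem_filter]
    exact fun h => hsimple v h.2
  have hNcard : ∀ v, (inNbr A v).ncard = d v := by
    intro v
    have : inNbr A v = ↑(N v) := by
      ext u; simp [inNbr, hN]
    rw [this, Set.ncard_coe_finset]
  set Sf : (V ≃ Fin n) → Finset V := fun f =>
    Finset.univ.filter (fun v => (k + 1) * rk (P v) v f < k * d v) with hSf
  have hNf : (Finset.univ : Finset (V ≃ Fin n)).Nonempty :=
    ⟨Fintype.equivFin V, Finset.mem_univ _⟩
  have hbig : ∑ f : V ≃ Fin n, (k + 1) * (Sf f).card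
      ≤ ∑ _f : V ≃ Fin n, k * Fintype.card V := by
    have hswap : ∑ f : V ≃ Fin n, (Sf f).card
        = ∑ v : V, (Finset.univ.filter
            (fun f : V ≃ Fin n => (k + 1) * rk (P v) v f < k * d v)).card := by
      have h1 : ∀ f : V ≃ Fin n, (Sf f).card
          = ∑ v : V, ite ((k + 1) * rk (P v) v f < k * d v) 1 0 :=
        fun f => Finset.card_filter _ _
      have h2 : ∀ v : V, (Finset.univ.filter
            (fun f : V ≃ Fin n => (k + 1) * rk (P v) v f < k * d v)).card
          = ∑ f : V ≃ Fin n, ite ((k + 1) * rk (P v) v f < k * d v) 1 0 :=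
        fun v => Finset.card_filter _ _
      rw [Finset.sum_congr rfl (fun f _ => h1 f), Finset.sum_comm]
      exact Finset.sum_congr rfl (fun v _ => (h2 v).symm)
    calc ∑ f : V ≃ Fin n, (k + 1) * (Sf f).card
        = (k + 1) * ∑ f : V ≃ Fin n, (Sf f).card := (Finset.mul_sum _ _ _).symm
      _ = ∑ v : V, (k + 1) * (Finset.univ.filter
            (fun f : V ≃ Fin n => (k + 1) * rk (P v) v f < k * d v)).card := by
          rw [hswap]; exact Finset.mul_sum _ _ _
      _ ≤ ∑ _v : V, k * (Finset.univ : Finset (V ≃ Fin n)).card :=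
          Finset.sum_le_sum (fun v _ => vertex_count (P v) v (hvP v) (hPcard v) k)
      _ = ∑ _f : V ≃ Fin n, k * Fintype.card V := by
          rw [Finset.sum_const, Finset.sum_const, smul_eq_mul, smul_eq_mul,
            Finset.card_univ, Finset.card_univ]
          ring
  obtain ⟨f0, _, hf0⟩ := Finset.exists_le_of_sum_le hNf hbig
  refine ⟨↑(Sf f0), ?_, by rwa [Set.ncard_coe_finset]⟩
  obtain ⟨hSC, hclosed⟩ := dClosure_closed A k (↑(Sf f0) : Set V)
  set C := dClosure A (fracOk A k) (↑(Sf f0) : Set V) with hC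
  have key : ∀ M : ℕ, ∀ v : V, (f0 v : ℕ) < M → v ∈ C := by
    intro M
    induction M with
    | zero => exact fun v h => absurd h (Nat.not_lt_zero _)
    | succ M ih =>
      intro v hvM
      by_cases hvS : v ∈ Sf f0
      · exact hSC hvS
      · apply hclosed v
        unfold fracOk
        rw [hNcard v]
        have h1 : k * d v ≤ (k + 1) * rk (P v) v f0 := by
          simp only [hSf, Finset.mem_filter, Finset.mem_univ, true_and, not_lt] at hvS
          exact hvS
        refine le_trans h1 (Nat.mul_le_mul_left _ ?_)
        rw [rk_eq]
        have h2 : (P v).filter (fun u => f0 u < f0 v)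
            = (N v).filter (fun u => f0 u < f0 v) := by
          rw [hP]
          rw [Finset.filter_insert, if_neg (lt_irrefl _)]
        rw [h2]
        have h3 : (((N v).filter (fun u => f0 u < f0 v) : Finset V) : Set V)
            ⊆ inNbr A v ∩ C := by
          intro u hu
          simp only [Finset.coe_filter, Set.mem_setOf_eq, hN, Finset.mem_filter,
            Finset.mem_univ, true_and] at hu
          refine ⟨hu.1, ih u ?_⟩
          have : (f0 u : ℕ) < (f0 v : ℕ) := hu.2
          omega
        calc ((N v).filter (fun u => f0 u < f0 v)).card
            = (((N v).filter (fun u => f0 u < f0 v) : Finset V) : Set V).ncard :=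
              (Set.ncard_coe_finset _).symm
          _ ≤ (inNbr A v ∩ C).ncard := Set.ncard_le_ncard h3 (Set.toFinite _)
  exact Set.eq_univ_of_forall (fun v => key n v (f0 v).isLt)
end

section
/- For every finite simple directed graph G(V,E) in which every vertex has positive indegree, there exists a set S ⊆ V with c(S, G, φ^strict) = V and |S| ≤ ⌊2·|V|/3⌋; that is, the minimum size of an irreversible dynamo of G under the strict-majority scenario is at most ⌊2·|V|/3⌋. -/
/-- The strict-majority threshold `φ^strict(v) = ⌈(deg^in(v)+1)/2⌉`:
`v` is colored white when more than half of its in-neighbors are white,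
i.e. `deg^in(v) < 2·n`. -/
def strictOk {V : Type*} (A : V → V → Prop) (v : V) (n : ℕ) : Prop :=
  (inNbr A v).ncard < 2 * n

section Aux

open Finset

variable {V : Type*} [Fintype V] [DecidableEq V] (A : V → V → Prop) [DecidableRel A]

def NbrF (v : V) : Finset V := Finset.univ.filter (fun u => A u v)

lemma mem_NbrF {u v : V} : u ∈ NbrF A v ↔ A u v := by simp [NbrF]

lemma coe_NbrF (v : V) : inNbr A v = ↑(NbrF A v) := by
  ext u; simp [inNbr, NbrF]

lemma ncard_inNbr (v : V) : (inNbr A v).ncard = (NbrF A v).card := by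
  rw [coe_NbrF, Set.ncard_coe_finset]

/-- number of in-neighbors of `v` coming before `v` in the ordering `σ`. -/
def Bcnt (σ : V ≃ Fin (Fintype.card V)) (v : V) : ℕ :=
  ((NbrF A v).filter (fun u => σ u < σ v)).card

/-- the seed set associated to an ordering `σ`. -/
def seed (σ : V ≃ Fin (Fintype.card V)) : Finset V :=
  Finset.univ.filter (fun v => 2 * Bcnt A σ v ≤ (NbrF A v).card)

lemma subset_dClosure (ok : V → ℕ → Prop) (S : Set V) : S ⊆ dClosure A ok S :=
  fun _ hx => Set.mem_sInter.2 fun _ hT => hT.1 hx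

lemma dClosure_closed_s4 (S : Set V) (v : V)
    (h : strictOk A v ((inNbr A v ∩ dClosure A (strictOk A) S).ncard)) :
    v ∈ dClosure A (strictOk A) S := by
  refine Set.mem_sInter.2 fun T hT => hT.2 v ?_
  have hsub : dClosure A (strictOk A) S ⊆ T := Set.sInter_subset_of_mem hT
  have hle : (inNbr A v ∩ dClosure A (strictOk A) S).ncard ≤ (inNbr A v ∩ T).ncard :=
    Set.ncard_le_ncard (Set.inter_subset_inter_right _ hsub) (Set.toFinite _)
  have h' : (inNbr A v).ncard < 2 * (inNbr A v ∩ dClosure A (strictOk A) S).ncard := h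
  show (inNbr A v).ncard < 2 * (inNbr A v ∩ T).ncard
  omega

lemma closure_seed (σ : V ≃ Fin (Fintype.card V)) :
    dClosure A (strictOk A) ↑(seed A σ) = Set.univ := by
  have key : ∀ m : ℕ, ∀ v : V, (σ v : ℕ) < m →
      v ∈ dClosure A (strictOk A) ↑(seed A σ) := by
    intro m
    induction m with
    | zero => exact fun v h => absurd h (by omega)
    | succ m ih =>
      intro v hv
      rcases Nat.lt_succ_iff_lt_or_eq.1 hv with h | h
      · exact ih v h
      by_cases hvS : v ∈ seed A σ
      · exact subset_dClosure A _ _ (Finset.mem_coe.2 hvS)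
      · have hd : (NbrF A v).card < 2 * Bcnt A σ v := by
          simp only [seed, mem_filter, mem_univ, true_and, not_le] at hvS
          omega
        apply dClosure_closed_s4
        have hsub : (((NbrF A v).filter (fun u => σ u < σ v) : Finset V) : Set V)
            ⊆ inNbr A v ∩ dClosure A (strictOk A) ↑(seed A σ) := by
          intro u hu
          rw [Finset.mem_coe, Finset.mem_filter, mem_NbrF] at hu
          refine ⟨hu.1, ih u ?_⟩
          have h2 : (σ u : ℕ) < (σ v : ℕ) := hu.2
          omega
        have hB : Bcnt A σ v ≤ (inNbr A v ∩ dClosure A (strictOk A) ↑(seed A σ)).ncard := by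
          have h3 := Set.ncard_le_ncard hsub (Set.toFinite _)
          rwa [Set.ncard_coe_finset] at h3
        show (inNbr A v).ncard < 2 * _
        rw [ncard_inNbr]
        omega
  rw [Set.eq_univ_iff_forall]
  exact fun v => key (Fintype.card V) v (σ v).isLt

lemma Bcnt_add {v : V} (σ : V ≃ Fin (Fintype.card V)) (hvT : v ∉ NbrF A v) :
    Bcnt A σ v + ((NbrF A v).filter (fun u => σ v < σ u)).card = (NbrF A v).card := by
  have h := Finset.card_filter_add_card_filter_not
    (s := NbrF A v) (p := fun u => σ u < σ v)
  have he : (NbrF A v).filter (fun u => ¬ σ u < σ v)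
      = (NbrF A v).filter (fun u => σ v < σ u) := by
    apply Finset.filter_congr
    intro u hu
    have hne : σ v ≠ σ u := σ.injective.ne (fun h => hvT (h ▸ hu))
    simp only [not_lt]
    exact ⟨fun h' => lt_of_le_of_ne h' hne, fun h' => le_of_lt h'⟩
  rw [he] at h
  rw [Bcnt]
  omega

lemma trans_swap_cancel {k : ℕ} (σ : V ≃ Fin k) (a b : Fin k) :
    (σ.trans (Equiv.swap a b)).trans (Equiv.swap a b) = σ := by
  rw [Equiv.trans_assoc, Equiv.swap_swap, Equiv.trans_refl]

/-- swapping `v` with its immediate successor `w` (within `T ∪ {v}`). -/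
lemma swap_step_up (T : Finset V) {v w : V} (hvT : v ∉ T) (σ : V ≃ Fin (Fintype.card V))
    (hw : w ∈ T) (hlt : σ v < σ w)
    (hmin : ∀ u ∈ T, σ v < σ u → σ w ≤ σ u) :
    (T.filter (fun u => (σ.trans (Equiv.swap (σ v) (σ w))) u
        < (σ.trans (Equiv.swap (σ v) (σ w))) v)
      = insert w (T.filter (fun u => σ u < σ v))) ∧
    (∀ u ∈ T, (σ.trans (Equiv.swap (σ v) (σ w))) u < (σ.trans (Equiv.swap (σ v) (σ w))) v →
       (σ.trans (Equiv.swap (σ v) (σ w))) u ≤ (σ.trans (Equiv.swap (σ v) (σ w))) w) := by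
  set σ' := σ.trans (Equiv.swap (σ v) (σ w)) with hσ'
  have hvw : v ≠ w := fun h => hvT (h ▸ hw)
  have hσv : σ' v = σ w := by simp [hσ', Equiv.swap_apply_left]
  have hσw : σ' w = σ v := by simp [hσ', Equiv.swap_apply_right]
  have hother : ∀ u, u ≠ v → u ≠ w → σ' u = σ u := by
    intro u h1 h2
    simp [hσ', Equiv.swap_apply_of_ne_of_ne (σ.injective.ne h1) (σ.injective.ne h2)]
  have hfilter : ∀ u ∈ T, (σ' u < σ' v ↔ (σ u < σ v ∨ u = w)) := by
    intro u hu
    have huv : u ≠ v := fun h => hvT (h ▸ hu)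
    by_cases huw : u = w
    · subst huw; simp [hσw, hσv, hlt]
    · rw [hother u huv huw, hσv]
      constructor
      · intro h
        by_contra hc
        push_neg at hc
        have h2 : σ v < σ u :=
          lt_of_le_of_ne hc.1 (σ.injective.ne (Ne.symm huv))
        exact absurd (hmin u hu h2) (not_le.2 h)
      · rintro (h | rfl)
        · exact lt_trans h hlt
        · exact absurd rfl huw
  constructor
  · ext u
    simp only [mem_filter, mem_insert]
    constructor
    · rintro ⟨hu, hlt'⟩
      rcases (hfilter u hu).1 hlt' with h | h
      · exact Or.inr ⟨hu, h⟩
      · exact Or.inl h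
    · rintro (rfl | ⟨hu, h⟩)
      · exact ⟨hw, (hfilter _ hw).2 (Or.inr rfl)⟩
      · exact ⟨hu, (hfilter u hu).2 (Or.inl h)⟩
  · intro u hu hlt'
    by_cases huw : u = w
    · subst huw; exact le_refl _
    · have huv : u ≠ v := fun h => hvT (h ▸ hu)
      rw [hother u huv huw, hσw]
      rcases (hfilter u hu).1 hlt' with h | h
      · exact le_of_lt h
      · exact absurd h huw

/-- swapping `v` with its immediate predecessor `w` (within `T ∪ {v}`). -/
lemma swap_step_down (T : Finset V) {v w : V} (hvT : v ∉ T) (σ : V ≃ Fin (Fintype.card V))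
    (hw : w ∈ T) (hgt : σ w < σ v)
    (hmax : ∀ u ∈ T, σ u < σ v → σ u ≤ σ w) :
    (T.filter (fun u => (σ.trans (Equiv.swap (σ v) (σ w))) u
        < (σ.trans (Equiv.swap (σ v) (σ w))) v)
      = (T.filter (fun u => σ u < σ v)).erase w) ∧
    (∀ u ∈ T, (σ.trans (Equiv.swap (σ v) (σ w))) v < (σ.trans (Equiv.swap (σ v) (σ w))) u →
       (σ.trans (Equiv.swap (σ v) (σ w))) w ≤ (σ.trans (Equiv.swap (σ v) (σ w))) u) := by
  set σ' := σ.trans (Equiv.swap (σ v) (σ w)) with hσ'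
  have hvw : v ≠ w := fun h => hvT (h ▸ hw)
  have hσv : σ' v = σ w := by simp [hσ', Equiv.swap_apply_left]
  have hσw : σ' w = σ v := by simp [hσ', Equiv.swap_apply_right]
  have hother : ∀ u, u ≠ v → u ≠ w → σ' u = σ u := by
    intro u h1 h2
    simp [hσ', Equiv.swap_apply_of_ne_of_ne (σ.injective.ne h1) (σ.injective.ne h2)]
  have hfilter : ∀ u ∈ T, (σ' u < σ' v ↔ (σ u < σ v ∧ u ≠ w)) := by
    intro u hu
    have huv : u ≠ v := fun h => hvT (h ▸ hu)
    by_cases huw : u = w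
    · subst huw
      rw [hσw, hσv]
      exact iff_of_false (not_lt.2 (le_of_lt hgt)) (fun h => h.2 rfl)
    · rw [hother u huv huw, hσv]
      constructor
      · intro h
        exact ⟨lt_trans h hgt, huw⟩
      · rintro ⟨h, -⟩
        exact lt_of_le_of_ne (hmax u hu h)
          (σ.injective.ne huw)
  constructor
  · ext u
    simp only [mem_filter, mem_erase]
    constructor
    · rintro ⟨hu, hlt'⟩
      obtain ⟨h1, h2⟩ := (hfilter u hu).1 hlt'
      exact ⟨h2, hu, h1⟩
    · rintro ⟨h2, hu, h1⟩
      exact ⟨hu, (hfilter u hu).2 ⟨h1, h2⟩⟩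
  · intro u hu hlt'
    by_cases huw : u = w
    · subst huw
      exact le_refl _
    · have huv : u ≠ v := fun h => hvT (h ▸ hu)
      rw [hother u huv huw, hσw]
      rw [hσv, hother u huv huw] at hlt'
      by_contra hc
      have h1 : σ u < σ v := lt_of_le_of_ne (not_le.1 hc).le (σ.injective.ne huv)
      have h2 := hmax u hu h1
      exact absurd hlt' (not_lt.2 h2)

/-- step up: swap `v` with its successor. -/
noncomputable def fstep (v : V) (σ : V ≃ Fin (Fintype.card V)) : V ≃ Fin (Fintype.card V) :=
  if h : ((NbrF A v).filter (fun u => σ v < σ u)).Nonempty then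
    σ.trans (Equiv.swap (σ v)
      ((((NbrF A v).filter (fun u => σ v < σ u)).image σ).min' (h.image σ)))
  else σ

/-- step down: swap `v` with its predecessor. -/
noncomputable def bstep (v : V) (σ : V ≃ Fin (Fintype.card V)) : V ≃ Fin (Fintype.card V) :=
  if h : ((NbrF A v).filter (fun u => σ u < σ v)).Nonempty then
    σ.trans (Equiv.swap (σ v)
      ((((NbrF A v).filter (fun u => σ u < σ v)).image σ).max' (h.image σ)))
  else σ

lemma fstep_spec {v : V} (hvT : v ∉ NbrF A v) (σ : V ≃ Fin (Fintype.card V))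
    (hlt : Bcnt A σ v < (NbrF A v).card) :
    Bcnt A (fstep A v σ) v = Bcnt A σ v + 1 ∧ bstep A v (fstep A v σ) = σ := by
  have hadd := Bcnt_add A σ hvT
  have hPne : ((NbrF A v).filter (fun u => σ v < σ u)).Nonempty := by
    rw [← Finset.card_pos]; omega
  obtain ⟨w, hwP, hwm⟩ := Finset.mem_image.1
    (Finset.min'_mem (((NbrF A v).filter (fun u => σ v < σ u)).image σ) (hPne.image σ))
  have hwT : w ∈ NbrF A v := (Finset.mem_filter.1 hwP).1
  have hvw : σ v < σ w := (Finset.mem_filter.1 hwP).2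
  have hmin : ∀ u ∈ NbrF A v, σ v < σ u → σ w ≤ σ u := by
    intro u hu h
    rw [hwm]
    exact Finset.min'_le _ _ (Finset.mem_image_of_mem σ (Finset.mem_filter.2 ⟨hu, h⟩))
  have hfe : fstep A v σ = σ.trans (Equiv.swap (σ v) (σ w)) := by
    rw [fstep, dif_pos hPne, ← hwm]
  obtain ⟨hfil, hmaxp⟩ := swap_step_up (NbrF A v) hvT σ hwT hvw hmin
  set σ' := σ.trans (Equiv.swap (σ v) (σ w)) with hσ'
  have hσv : σ' v = σ w := by simp [hσ', Equiv.swap_apply_left]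
  have hσw : σ' w = σ v := by simp [hσ', Equiv.swap_apply_right]
  have hwnot : w ∉ (NbrF A v).filter (fun u => σ u < σ v) := by
    intro hx
    exact absurd ((Finset.mem_filter.1 hx).2) (not_lt.2 (le_of_lt hvw))
  have hB : Bcnt A σ' v = Bcnt A σ v + 1 := by
    rw [Bcnt, hfil, Finset.card_insert_of_notMem hwnot]; rfl
  refine ⟨by rw [hfe]; exact hB, ?_⟩
  -- now compute bstep of σ'
  have hQne : ((NbrF A v).filter (fun u => σ' u < σ' v)).Nonempty := by
    refine ⟨w, Finset.mem_filter.2 ⟨hwT, ?_⟩⟩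
    rw [hσv, hσw]; exact hvw
  have hM : (((NbrF A v).filter (fun u => σ' u < σ' v)).image σ').max' (hQne.image σ')
      = σ' w := by
    apply le_antisymm
    · apply Finset.max'_le
      intro y hy
      obtain ⟨u, huQ, hu⟩ := Finset.mem_image.1 hy
      obtain ⟨huT, hulv⟩ := Finset.mem_filter.1 huQ
      rw [← hu]
      exact hmaxp u huT hulv
    · apply Finset.le_max'
      refine Finset.mem_image_of_mem σ' (Finset.mem_filter.2 ⟨hwT, ?_⟩)
      rw [hσv, hσw]; exact hvw
  have hswap : Equiv.swap (σ' v) (σ' w) = Equiv.swap (σ v) (σ w) := by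
    rw [hσv, hσw, Equiv.swap_comm]
  rw [hfe]
  show bstep A v σ' = σ
  rw [bstep, dif_pos hQne, hM, hswap, hσ', trans_swap_cancel]

lemma bstep_spec {v : V} (hvT : v ∉ NbrF A v) (σ : V ≃ Fin (Fintype.card V))
    (hpos : 0 < Bcnt A σ v) :
    Bcnt A (bstep A v σ) v = Bcnt A σ v - 1 ∧ fstep A v (bstep A v σ) = σ := by
  have hQne : ((NbrF A v).filter (fun u => σ u < σ v)).Nonempty := by
    rw [← Finset.card_pos]; exact hpos
  obtain ⟨w, hwQ, hwm⟩ := Finset.mem_image.1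
    (Finset.max'_mem (((NbrF A v).filter (fun u => σ u < σ v)).image σ) (hQne.image σ))
  have hwT : w ∈ NbrF A v := (Finset.mem_filter.1 hwQ).1
  have hwv : σ w < σ v := (Finset.mem_filter.1 hwQ).2
  have hmax : ∀ u ∈ NbrF A v, σ u < σ v → σ u ≤ σ w := by
    intro u hu h
    rw [hwm]
    exact Finset.le_max' _ _ (Finset.mem_image_of_mem σ (Finset.mem_filter.2 ⟨hu, h⟩))
  have hfe : bstep A v σ = σ.trans (Equiv.swap (σ v) (σ w)) := by
    rw [bstep, dif_pos hQne, ← hwm]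
  obtain ⟨hfil, hminp⟩ := swap_step_down (NbrF A v) hvT σ hwT hwv hmax
  set σ' := σ.trans (Equiv.swap (σ v) (σ w)) with hσ'
  have hσv : σ' v = σ w := by simp [hσ', Equiv.swap_apply_left]
  have hσw : σ' w = σ v := by simp [hσ', Equiv.swap_apply_right]
  have hwmem : w ∈ (NbrF A v).filter (fun u => σ u < σ v) := hwQ
  have hB : Bcnt A σ' v = Bcnt A σ v - 1 := by
    rw [Bcnt, hfil, Finset.card_erase_of_mem hwmem]; rfl
  refine ⟨by rw [hfe]; exact hB, ?_⟩
  have hPne : ((NbrF A v).filter (fun u => σ' v < σ' u)).Nonempty := by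
    refine ⟨w, Finset.mem_filter.2 ⟨hwT, ?_⟩⟩
    rw [hσv, hσw]; exact hwv
  have hM : (((NbrF A v).filter (fun u => σ' v < σ' u)).image σ').min' (hPne.image σ')
      = σ' w := by
    apply le_antisymm
    · apply Finset.min'_le
      refine Finset.mem_image_of_mem σ' (Finset.mem_filter.2 ⟨hwT, ?_⟩)
      rw [hσv, hσw]; exact hwv
    · apply Finset.le_min'
      intro y hy
      obtain ⟨u, huP, hu⟩ := Finset.mem_image.1 hy
      obtain ⟨huT, hulv⟩ := Finset.mem_filter.1 huP
      rw [← hu]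
      exact hminp u huT hulv
  have hswap : Equiv.swap (σ' v) (σ' w) = Equiv.swap (σ v) (σ w) := by
    rw [hσv, hσw, Equiv.swap_comm]
  rw [hfe]
  show fstep A v σ' = σ
  rw [fstep, dif_pos hPne, hM, hswap, hσ', trans_swap_cancel]

lemma fiber_card {v : V} (hvT : v ∉ NbrF A v) {j : ℕ} (hj : j < (NbrF A v).card) :
    ((Finset.univ : Finset (V ≃ Fin (Fintype.card V))).filter
        (fun σ => Bcnt A σ v = j)).card
      = (Finset.univ.filter (fun σ : V ≃ Fin (Fintype.card V) => Bcnt A σ v = j + 1)).card := by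
  apply Finset.card_bij' (fun σ _ => fstep A v σ) (fun σ _ => bstep A v σ)
  · intro σ hσ
    rw [Finset.mem_filter] at hσ ⊢
    refine ⟨Finset.mem_univ _, ?_⟩
    have := (fstep_spec A hvT σ (by omega)).1
    omega
  · intro σ hσ
    rw [Finset.mem_filter] at hσ ⊢
    refine ⟨Finset.mem_univ _, ?_⟩
    have := (bstep_spec A hvT σ (by omega)).1
    omega
  · intro σ hσ
    rw [Finset.mem_filter] at hσ
    exact (fstep_spec A hvT σ (by omega)).2
  · intro σ hσ
    rw [Finset.mem_filter] at hσ
    exact (bstep_spec A hvT σ (by omega)).2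

lemma fiber_const {v : V} (hvT : v ∉ NbrF A v) :
    ∀ j ≤ (NbrF A v).card,
      ((Finset.univ : Finset (V ≃ Fin (Fintype.card V))).filter
        (fun σ => Bcnt A σ v = j)).card
      = ((Finset.univ : Finset (V ≃ Fin (Fintype.card V))).filter
        (fun σ => Bcnt A σ v = 0)).card := by
  intro j
  induction j with
  | zero => intro _; rfl
  | succ j ih =>
    intro hj
    rw [← fiber_card A hvT (by omega), ih (by omega)]

lemma count_le {v : V} (hvT : v ∉ NbrF A v) (hd : 1 ≤ (NbrF A v).card) :
    3 * ((Finset.univ : Finset (V ≃ Fin (Fintype.card V))).filter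
        (fun σ => 2 * Bcnt A σ v ≤ (NbrF A v).card)).card
      ≤ 2 * (Finset.univ : Finset (V ≃ Fin (Fintype.card V))).card := by
  set d := (NbrF A v).card with hdd
  set c0 := ((Finset.univ : Finset (V ≃ Fin (Fintype.card V))).filter
        (fun σ => Bcnt A σ v = 0)).card with hc0
  have hB : ∀ σ : V ≃ Fin (Fintype.card V), Bcnt A σ v ≤ d :=
    fun σ => Finset.card_filter_le _ _
  have h1 : (Finset.univ : Finset (V ≃ Fin (Fintype.card V))).card
      = ∑ j ∈ Finset.range (d + 1),
        (Finset.univ.filter (fun σ : V ≃ Fin (Fintype.card V) => Bcnt A σ v = j)).card :=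
    Finset.card_eq_sum_card_fiberwise
      (fun σ _ => Finset.mem_range.2 (Nat.lt_succ_of_le (hB σ)))
  have h1' : (Finset.univ : Finset (V ≃ Fin (Fintype.card V))).card = (d + 1) * c0 := by
    rw [h1, Finset.sum_congr rfl
      (fun j hj => fiber_const A hvT j (by
        have := Finset.mem_range.1 hj; omega))]
    rw [Finset.sum_const, Finset.card_range, smul_eq_mul]
  have h2 : ((Finset.univ : Finset (V ≃ Fin (Fintype.card V))).filter
        (fun σ => 2 * Bcnt A σ v ≤ d)).card
      = ∑ j ∈ Finset.range (d / 2 + 1),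
        (((Finset.univ : Finset (V ≃ Fin (Fintype.card V))).filter
          (fun σ => 2 * Bcnt A σ v ≤ d)).filter (fun σ => Bcnt A σ v = j)).card := by
    apply Finset.card_eq_sum_card_fiberwise
    intro σ hσ
    rw [Finset.mem_coe, Finset.mem_filter] at hσ
    rw [Finset.mem_coe, Finset.mem_range]
    show Bcnt A σ v < d / 2 + 1
    omega
  have h3 : ∀ j ∈ Finset.range (d / 2 + 1),
      (((Finset.univ : Finset (V ≃ Fin (Fintype.card V))).filter
          (fun σ => 2 * Bcnt A σ v ≤ d)).filter (fun σ => Bcnt A σ v = j)).card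
      = c0 := by
    intro j hj
    have hj' := Finset.mem_range.1 hj
    have : ((Finset.univ : Finset (V ≃ Fin (Fintype.card V))).filter
          (fun σ => 2 * Bcnt A σ v ≤ d)).filter (fun σ => Bcnt A σ v = j)
        = (Finset.univ : Finset (V ≃ Fin (Fintype.card V))).filter
          (fun σ => Bcnt A σ v = j) := by
      ext σ
      simp only [Finset.mem_filter, Finset.mem_univ, true_and]
      constructor
      · rintro ⟨-, h⟩; exact h
      · intro h; exact ⟨by omega, h⟩
    rw [this]
    exact fiber_const A hvT j (by omega)
  have h2' : ((Finset.univ : Finset (V ≃ Fin (Fintype.card V))).filter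
        (fun σ => 2 * Bcnt A σ v ≤ d)).card = (d / 2 + 1) * c0 := by
    rw [h2, Finset.sum_congr rfl h3, Finset.sum_const, Finset.card_range, smul_eq_mul]
  rw [h2', h1']
  have harith : 3 * (d / 2 + 1) ≤ 2 * (d + 1) := by omega
  calc 3 * ((d / 2 + 1) * c0) = (3 * (d / 2 + 1)) * c0 := by ring
    _ ≤ (2 * (d + 1)) * c0 := Nat.mul_le_mul_right _ harith
    _ = 2 * ((d + 1) * c0) := by ring

lemma exists_good_seed (hsimple : ∀ v, ¬ A v v) (hindeg : ∀ v : V, ∃ u, A u v) :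
    ∃ σ : V ≃ Fin (Fintype.card V), 3 * (seed A σ).card ≤ 2 * Fintype.card V := by
  have hvT : ∀ v : V, v ∉ NbrF A v := fun v h => hsimple v (mem_NbrF A |>.1 h)
  have hd : ∀ v : V, 1 ≤ (NbrF A v).card := by
    intro v
    obtain ⟨u, hu⟩ := hindeg v
    exact Finset.card_pos.2 ⟨u, (mem_NbrF A).2 hu⟩
  have hswap : ∑ σ ∈ (Finset.univ : Finset (V ≃ Fin (Fintype.card V))), (seed A σ).card
      = ∑ v ∈ (Finset.univ : Finset V),
        ((Finset.univ : Finset (V ≃ Fin (Fintype.card V))).filter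
          (fun σ => 2 * Bcnt A σ v ≤ (NbrF A v).card)).card := by
    simp only [seed, Finset.card_filter]
    exact Finset.sum_comm
  have hbound : 3 * ∑ σ ∈ (Finset.univ : Finset (V ≃ Fin (Fintype.card V))), (seed A σ).card
      ≤ 2 * Fintype.card V * (Finset.univ : Finset (V ≃ Fin (Fintype.card V))).card := by
    rw [hswap, Finset.mul_sum]
    calc ∑ v ∈ (Finset.univ : Finset V), 3 *
          ((Finset.univ : Finset (V ≃ Fin (Fintype.card V))).filter
            (fun σ => 2 * Bcnt A σ v ≤ (NbrF A v).card)).card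
        ≤ ∑ _v ∈ (Finset.univ : Finset V),
            2 * (Finset.univ : Finset (V ≃ Fin (Fintype.card V))).card :=
          Finset.sum_le_sum (fun v _ => count_le A (hvT v) (hd v))
      _ = Fintype.card V * (2 * (Finset.univ : Finset (V ≃ Fin (Fintype.card V))).card) := by
          rw [Finset.sum_const, Finset.card_univ, smul_eq_mul]
      _ = 2 * Fintype.card V * (Finset.univ : Finset (V ≃ Fin (Fintype.card V))).card := by
          ring
  by_contra hc
  push_neg at hc
  have hall : ∀ σ ∈ (Finset.univ : Finset (V ≃ Fin (Fintype.card V))),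
      2 * Fintype.card V + 1 ≤ 3 * (seed A σ).card := fun σ _ => hc σ
  have hsum := Finset.sum_le_sum hall
  rw [Finset.sum_const, smul_eq_mul] at hsum
  rw [← Finset.mul_sum] at hsum
  have hΩpos : 0 < (Finset.univ : Finset (V ≃ Fin (Fintype.card V))).card :=
    Finset.card_pos.2 ⟨Fintype.equivFin V, Finset.mem_univ _⟩
  nlinarith [hsum, hbound, hΩpos]

end Aux

/-- Theorem: every finite digraph with positive indegrees has an irreversible
dynamo of size at most `⌊2·|V|/3⌋` under the strict-majority scenario. -/
theorem stmt4 {V : Type*} [Fintype V] (A : V → V → Prop)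
    (hsimple : ∀ v, ¬ A v v) (hindeg : ∀ v : V, ∃ u, A u v) :
    ∃ S : Set V, dClosure A (strictOk A) S = Set.univ ∧
      S.ncard ≤ 2 * Fintype.card V / 3 := by
  classical
  obtain ⟨σ, hσ⟩ := exists_good_seed A hsimple hindeg
  refine ⟨↑(seed A σ), closure_seed A σ, ?_⟩
  rw [Set.ncard_coe_finset]
  rw [Nat.le_div_iff_mul_le (by norm_num)]
  omega
end

section
/- Let G(V,E) be a finite simple undirected graph and let 𝒢(𝒱,ℰ) be the graph constructed from G as described. For each v ∈ V, every set S ⊆ 𝒱 with c(S, 𝒢, φ^strict) = 𝒱 satisfies S ∩ B_v ≠ ∅, where B_v = {w_v} ∪ N*_G(v) ∪ ⋃_{u∈N*_G(v)} 𝒳_u. -/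
/-- The degree `deg_G(v)` of `v` in `G`, as the cardinality of its
neighborhood. -/
noncomputable def deg {V : Type*} (G : SimpleGraph V) (v : V) : ℕ :=
  (G.neighborSet v).ncard

/-- `u ∈ N*_G(v) = N_G(v) ∪ {v}`. -/
def closedNbr {V : Type*} (G : SimpleGraph V) (v u : V) : Prop :=
  G.Adj v u ∨ u = v

/-- The vertex set `𝒱 = V ∪ 𝒲 ∪ 𝒳 ∪ 𝒴 ∪ {z₁,z₂} ∪ {g₁,g₂}` of the graph
`𝒢` constructed from `G`: for each `v ∈ V` there are fresh vertices `w v`,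
`x v i` for `i < deg_G(v)` (the set `𝒳_v`) and `y v i` for `i < deg_G(v)`
(the set `𝒴_v`), plus four further fresh vertices `z₁, z₂, g₁, g₂`. -/
inductive CalV {V : Type*} (G : SimpleGraph V) where
  | orig (v : V)
  | w (v : V)
  | x (v : V) (i : Fin (deg G v))
  | y (v : V) (i : Fin (deg G v))
  | z1
  | z2
  | g1
  | g2

/-- The edges `ℰ` of `𝒢`, as a base relation: `(v, x)` for `x ∈ 𝒳_v`;
`(w_v, u)` for `u ∈ N*_G(v)`; `(w_v, y)` for `y ∈ 𝒴_v`; `(y, z₁)` and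
`(y, z₂)` for `y ∈ 𝒴`; `(z₁, g₁)`; `(z₂, g₂)`. -/
inductive CalRel {V : Type*} (G : SimpleGraph V) : CalV G → CalV G → Prop where
  | vx (v : V) (i : Fin (deg G v)) : CalRel G (.orig v) (.x v i)
  | wu (v u : V) (h : closedNbr G v u) : CalRel G (.w v) (.orig u)
  | wy (v : V) (i : Fin (deg G v)) : CalRel G (.w v) (.y v i)
  | yz1 (v : V) (i : Fin (deg G v)) : CalRel G (.y v i) .z1
  | yz2 (v : V) (i : Fin (deg G v)) : CalRel G (.y v i) .z2
  | zg1 : CalRel G .z1 .g1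
  | zg2 : CalRel G .z2 .g2

/-- The graph `𝒢(𝒱, ℰ)` constructed from `G`. -/
noncomputable def CalG {V : Type*} (G : SimpleGraph V) : SimpleGraph (CalV G) :=
  SimpleGraph.fromRel (CalRel G)

/-- `strictClosure H S` is `c(S, H, φ^strict)`: the least superset of `S`
closed under the strict-majority coloring rule, by which a vertex is colored
white whenever more than half of its neighbors are white. -/
def strictClosure {W : Type*} (H : SimpleGraph W) (S : Set W) : Set W :=
  ⋂₀ {T : Set W | S ⊆ T ∧
    ∀ v, (H.neighborSet v).ncard < 2 * (H.neighborSet v ∩ T).ncard → v ∈ T}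

/-- `B_v = {w_v} ∪ N*_G(v) ∪ ⋃_{u ∈ N*_G(v)} 𝒳_u`, as a set of vertices of
`𝒢`. -/
def Bset {V : Type*} (G : SimpleGraph V) (v : V) : Set (CalV G) :=
  {CalV.w v} ∪ {a | ∃ u, closedNbr G v u ∧ a = CalV.orig u}
    ∪ {a | ∃ u, closedNbr G v u ∧ ∃ i : Fin (deg G u), a = CalV.x u i}

section Aux
set_option linter.unusedSectionVars false

variable {V : Type*} [Fintype V] {G : SimpleGraph V}

lemma closedNbr_symm {v u : V} (h : closedNbr G v u) : closedNbr G u v := by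
  rcases h with h | h
  · exact Or.inl h.symm
  · exact Or.inr h.symm

lemma orig_inj : Function.Injective (CalV.orig (G := G)) := by
  intro a b h; injection h

lemma w_inj : Function.Injective (CalV.w (G := G)) := by
  intro a b h; injection h

lemma y_inj (v : V) : Function.Injective (CalV.y (G := G) v) := by
  intro i j h
  have := CalV.y.injEq (G := G) v i v j
  rw [this] at h
  exact eq_of_heq h.2

lemma x_inj (v : V) : Function.Injective (CalV.x (G := G) v) := by
  intro i j h
  have := CalV.x.injEq (G := G) v i v j
  rw [this] at h
  exact eq_of_heq h.2

lemma nb_w (v : V) :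
    (CalG G).neighborSet (CalV.w v) =
      (CalV.orig '' {u | closedNbr G v u}) ∪ Set.range (CalV.y (G := G) v) := by
  ext a
  simp only [SimpleGraph.mem_neighborSet, CalG, SimpleGraph.fromRel_adj,
    Set.mem_union, Set.mem_image, Set.mem_range, Set.mem_setOf_eq]
  constructor
  · rintro ⟨-, h | h⟩
    · cases h with
      | wu v u hu => exact Or.inl ⟨u, hu, rfl⟩
      | wy v i => exact Or.inr ⟨i, rfl⟩
    · cases h
  · rintro (⟨u, hu, rfl⟩ | ⟨i, rfl⟩)
    · exact ⟨by simp, Or.inl (CalRel.wu v u hu)⟩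
    · exact ⟨by simp, Or.inl (CalRel.wy v i)⟩

lemma nb_orig (u : V) :
    (CalG G).neighborSet (CalV.orig u) =
      Set.range (CalV.x (G := G) u) ∪ (CalV.w '' {t | closedNbr G u t}) := by
  ext a
  simp only [SimpleGraph.mem_neighborSet, CalG, SimpleGraph.fromRel_adj,
    Set.mem_union, Set.mem_image, Set.mem_range, Set.mem_setOf_eq]
  constructor
  · rintro ⟨-, h | h⟩
    · cases h with
      | vx v i => exact Or.inl ⟨i, rfl⟩
    · cases h with
      | wu t u' ht => exact Or.inr ⟨t, closedNbr_symm ht, rfl⟩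
  · rintro (⟨i, rfl⟩ | ⟨t, ht, rfl⟩)
    · exact ⟨by simp, Or.inl (CalRel.vx u i)⟩
    · exact ⟨by simp, Or.inr (CalRel.wu t u (closedNbr_symm ht))⟩

lemma nb_x (u : V) (j : Fin (deg G u)) :
    (CalG G).neighborSet (CalV.x u j) = {CalV.orig u} := by
  ext a
  simp only [SimpleGraph.mem_neighborSet, CalG, SimpleGraph.fromRel_adj,
    Set.mem_singleton_iff]
  constructor
  · rintro ⟨-, h | h⟩
    · cases h
    · cases h with
      | vx v i => rfl
  · rintro rfl
    exact ⟨by simp, Or.inr (CalRel.vx u j)⟩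

lemma closed_ncard (v : V) : {u | closedNbr G v u}.ncard = deg G v + 1 := by
  have h : {u | closedNbr G v u} = insert v (G.neighborSet v) := by
    ext u
    simp [closedNbr, SimpleGraph.mem_neighborSet, or_comm, eq_comm]
  rw [h, Set.ncard_insert_of_notMem (by simp)]
  rfl

lemma range_y_ncard (v : V) : (Set.range (CalV.y (G := G) v)).ncard = deg G v := by
  rw [← Nat.card_coe_set_eq, Nat.card_range_of_injective (y_inj v),
    Nat.card_eq_fintype_card, Fintype.card_fin]

lemma range_x_ncard (v : V) : (Set.range (CalV.x (G := G) v)).ncard = deg G v := by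
  rw [← Nat.card_coe_set_eq, Nat.card_range_of_injective (x_inj v),
    Nat.card_eq_fintype_card, Fintype.card_fin]

lemma wv_mem_B (v : V) : CalV.w v ∈ Bset G v := Or.inl (Or.inl rfl)

lemma orig_mem_B {v u : V} (h : closedNbr G v u) : CalV.orig u ∈ Bset G v :=
  Or.inl (Or.inr ⟨u, h, rfl⟩)

lemma x_mem_B {v u : V} (h : closedNbr G v u) (i : Fin (deg G u)) :
    CalV.x u i ∈ Bset G v :=
  Or.inr ⟨u, h, i, rfl⟩

end Aux

/-- Lemma: every irreversible dynamo of `𝒢` under the strict-majority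
scenario meets `B_v` for each `v ∈ V`. -/
theorem stmt17 {V : Type*} [Fintype V] (G : SimpleGraph V) (v : V)
    (S : Set (CalV G)) (hS : strictClosure (CalG G) S = Set.univ) :
    (S ∩ Bset G v).Nonempty := by
  by_contra hne
  rw [Set.not_nonempty_iff_eq_empty] at hne
  have hSsub : S ⊆ (Bset G v)ᶜ := by
    intro a ha hb
    have : a ∈ S ∩ Bset G v := ⟨ha, hb⟩
    rw [hne] at this
    exact this
  have hmem : (Bset G v)ᶜ ∈ {T : Set (CalV G) | S ⊆ T ∧
      ∀ a, ((CalG G).neighborSet a).ncard <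
        2 * ((CalG G).neighborSet a ∩ T).ncard → a ∈ T} := by
    refine ⟨hSsub, ?_⟩
    intro a ha
    by_contra hB
    rw [Set.notMem_compl_iff] at hB
    rcases hB with (hB | hB) | hB
    · -- a = w v
      rcases hB with rfl
      have hcard : ((CalG G).neighborSet (CalV.w v)).ncard = (deg G v + 1) + deg G v := by
        rw [nb_w, Set.ncard_union_eq ?_ (Set.toFinite _) (Set.toFinite _),
          Set.ncard_image_of_injective _ orig_inj, closed_ncard, range_y_ncard]
        rw [Set.disjoint_left]
        rintro b ⟨u, hu, rfl⟩ ⟨i, h⟩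
        cases h
      have hsub : (CalG G).neighborSet (CalV.w v) ∩ (Bset G v)ᶜ ⊆
          Set.range (CalV.y (G := G) v) := by
        rw [nb_w]
        rintro b ⟨⟨u, hu, rfl⟩ | hy, hc⟩
        · exact absurd (orig_mem_B hu) hc
        · exact hy
      have hle := Set.ncard_le_ncard hsub (Set.toFinite _)
      rw [range_y_ncard] at hle
      rw [hcard] at ha
      omega
    · -- a = orig u, closedNbr v u
      obtain ⟨u, hu, rfl⟩ := hB
      have hcard : ((CalG G).neighborSet (CalV.orig u)).ncard = deg G u + (deg G u + 1) := by
        rw [nb_orig, Set.ncard_union_eq ?_ (Set.toFinite _) (Set.toFinite _),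
          Set.ncard_image_of_injective _ w_inj, closed_ncard, range_x_ncard]
        rw [Set.disjoint_left]
        rintro b ⟨i, rfl⟩ ⟨t, ht, h⟩
        cases h
      have hsub : (CalG G).neighborSet (CalV.orig u) ∩ (Bset G v)ᶜ ⊆
          (CalV.w '' {t | closedNbr G u t}) \ {CalV.w v} := by
        rw [nb_orig]
        rintro b ⟨⟨i, rfl⟩ | ⟨t, ht, rfl⟩, hc⟩
        · exact absurd (x_mem_B hu i) hc
        · refine ⟨⟨t, ht, rfl⟩, ?_⟩
          intro h
          rw [Set.mem_singleton_iff] at h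
          rw [h] at hc
          exact hc (wv_mem_B v)
      have hdiff : ((CalV.w '' {t | closedNbr G u t}) \ ({CalV.w v} : Set (CalV G))).ncard
          = deg G u := by
        have hvmem : CalV.w (G := G) v ∈ CalV.w (G := G) '' {t | closedNbr G u t} :=
          ⟨v, closedNbr_symm hu, rfl⟩
        rw [Set.ncard_diff_singleton_of_mem hvmem,
          Set.ncard_image_of_injective _ w_inj, closed_ncard]
        omega
      have hle := Set.ncard_le_ncard hsub (Set.toFinite _)
      rw [hdiff] at hle
      rw [hcard] at ha
      omega
    · -- a = x u i, closedNbr v u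
      obtain ⟨u, hu, i, rfl⟩ := hB
      have hempty : (CalG G).neighborSet (CalV.x u i) ∩ (Bset G v)ᶜ = ∅ := by
        rw [nb_x]
        ext b
        simp only [Set.mem_inter_iff, Set.mem_singleton_iff, Set.mem_empty_iff_false,
          iff_false, not_and]
        rintro rfl hc
        exact hc (orig_mem_B hu)
      rw [hempty, Set.ncard_empty] at ha
      omega
  have h2 : strictClosure (CalG G) S ⊆ (Bset G v)ᶜ := Set.sInter_subset_of_mem hmem
  rw [hS] at h2
  exact h2 (Set.mem_univ (CalV.w v)) (wv_mem_B v)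
end

section
/- Let G(V,E) be a finite simple undirected graph and let 𝒢(𝒱,ℰ) be the graph constructed from G as described. Then every vertex of 𝒢 has odd degree. Specifically: deg_𝒢(v) = 2·deg_G(v)+1 for each v ∈ V; deg_𝒢(w_v) = 2·deg_G(v)+1 for each v ∈ V; each vertex of 𝒳 and each of g_1, g_2 has degree 1; each vertex of 𝒴 has degree 3; and deg_𝒢(z_1) = deg_𝒢(z_2) = 2·|E| + 1. -/
section Aux

variable {V : Type*} (G : SimpleGraph V)

lemma calG_adj (a b : CalV G) :
    (CalG G).Adj a b ↔ a ≠ b ∧ (CalRel G a b ∨ CalRel G b a) :=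
  SimpleGraph.fromRel_adj _ a b

lemma ns_orig (v : V) : (CalG G).neighborSet (.orig v) =
    (Set.range fun i : Fin (deg G v) => (CalV.x v i : CalV G)) ∪
      (CalV.w '' {u | closedNbr G u v}) := by
  ext b
  simp only [SimpleGraph.mem_neighborSet, calG_adj, Set.mem_union, Set.mem_range,
    Set.mem_image, Set.mem_setOf_eq]
  constructor
  · rintro ⟨-, h | h⟩
    · cases h; exact Or.inl ⟨_, rfl⟩
    · cases h with
      | wu u _ hu => exact Or.inr ⟨u, hu, rfl⟩
  · rintro (⟨i, rfl⟩ | ⟨u, hu, rfl⟩)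
    · exact ⟨(fun h => by cases h), Or.inl (.vx v i)⟩
    · exact ⟨(fun h => by cases h), Or.inr (.wu u v hu)⟩

lemma ns_w (v : V) : (CalG G).neighborSet (.w v) =
    (CalV.orig '' {u | closedNbr G v u}) ∪
      (Set.range fun i : Fin (deg G v) => (CalV.y v i : CalV G)) := by
  ext b
  simp only [SimpleGraph.mem_neighborSet, calG_adj, Set.mem_union, Set.mem_range,
    Set.mem_image, Set.mem_setOf_eq]
  constructor
  · rintro ⟨-, h | h⟩
    · cases h with
      | wu _ u hu => exact Or.inl ⟨u, hu, rfl⟩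
      | wy _ i => exact Or.inr ⟨i, rfl⟩
    · cases h
  · rintro (⟨u, hu, rfl⟩ | ⟨i, rfl⟩)
    · exact ⟨(fun h => by cases h), Or.inl (.wu v u hu)⟩
    · exact ⟨(fun h => by cases h), Or.inl (.wy v i)⟩

lemma ns_x (v : V) (i : Fin (deg G v)) :
    (CalG G).neighborSet (.x v i) = {CalV.orig v} := by
  ext b
  simp only [SimpleGraph.mem_neighborSet, calG_adj, Set.mem_singleton_iff]
  constructor
  · rintro ⟨-, h | h⟩
    · cases h
    · cases h; rfl
  · rintro rfl
    exact ⟨(fun h => by cases h), Or.inr (.vx v i)⟩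

lemma ns_y (v : V) (i : Fin (deg G v)) :
    (CalG G).neighborSet (.y v i) = {CalV.w v, .z1, .z2} := by
  ext b
  simp only [SimpleGraph.mem_neighborSet, calG_adj, Set.mem_insert_iff,
    Set.mem_singleton_iff]
  constructor
  · rintro ⟨-, h | h⟩
    · cases h with
      | yz1 => exact Or.inr (Or.inl rfl)
      | yz2 => exact Or.inr (Or.inr rfl)
    · cases h; exact Or.inl rfl
  · rintro (rfl | rfl | rfl)
    · exact ⟨(fun h => by cases h), Or.inr (.wy v i)⟩
    · exact ⟨(fun h => by cases h), Or.inl (.yz1 v i)⟩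
    · exact ⟨(fun h => by cases h), Or.inl (.yz2 v i)⟩

lemma ns_z1 : (CalG G).neighborSet .z1 =
    (Set.range fun p : Σ v : V, Fin (deg G v) => (CalV.y p.1 p.2 : CalV G)) ∪
      {CalV.g1} := by
  ext b
  simp only [SimpleGraph.mem_neighborSet, calG_adj, Set.mem_union, Set.mem_range,
    Set.mem_singleton_iff]
  constructor
  · rintro ⟨-, h | h⟩
    · cases h; exact Or.inr rfl
    · cases h with
      | yz1 v i => exact Or.inl ⟨⟨v, i⟩, rfl⟩
  · rintro (⟨⟨v, i⟩, rfl⟩ | rfl)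
    · exact ⟨(fun h => by cases h), Or.inr (.yz1 v i)⟩
    · exact ⟨(fun h => by cases h), Or.inl .zg1⟩

lemma ns_z2 : (CalG G).neighborSet .z2 =
    (Set.range fun p : Σ v : V, Fin (deg G v) => (CalV.y p.1 p.2 : CalV G)) ∪
      {CalV.g2} := by
  ext b
  simp only [SimpleGraph.mem_neighborSet, calG_adj, Set.mem_union, Set.mem_range,
    Set.mem_singleton_iff]
  constructor
  · rintro ⟨-, h | h⟩
    · cases h; exact Or.inr rfl
    · cases h with
      | yz2 v i => exact Or.inl ⟨⟨v, i⟩, rfl⟩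
  · rintro (⟨⟨v, i⟩, rfl⟩ | rfl)
    · exact ⟨(fun h => by cases h), Or.inr (.yz2 v i)⟩
    · exact ⟨(fun h => by cases h), Or.inl .zg2⟩

lemma ns_g1 : (CalG G).neighborSet .g1 = {(CalV.z1 : CalV G)} := by
  ext b
  simp only [SimpleGraph.mem_neighborSet, calG_adj, Set.mem_singleton_iff]
  constructor
  · rintro ⟨-, h | h⟩
    · cases h
    · cases h; rfl
  · rintro rfl
    exact ⟨(fun h => by cases h), Or.inr .zg1⟩

lemma ns_g2 : (CalG G).neighborSet .g2 = {(CalV.z2 : CalV G)} := by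
  ext b
  simp only [SimpleGraph.mem_neighborSet, calG_adj, Set.mem_singleton_iff]
  constructor
  · rintro ⟨-, h | h⟩
    · cases h
    · cases h; rfl
  · rintro rfl
    exact ⟨(fun h => by cases h), Or.inr .zg2⟩

lemma closed_set_left (v : V) : {u | closedNbr G u v} = insert v (G.neighborSet v) := by
  ext u
  constructor
  · rintro (h | rfl)
    · exact Or.inr (h.symm)
    · exact Or.inl rfl
  · rintro (rfl | h)
    · exact Or.inr rfl
    · exact Or.inl h.symm

lemma closed_set_right (v : V) : {u | closedNbr G v u} = insert v (G.neighborSet v) := by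
  ext u
  constructor
  · rintro (h | rfl)
    · exact Or.inr h
    · exact Or.inl rfl
  · rintro (rfl | h)
    · exact Or.inr rfl
    · exact Or.inl h

lemma ncard_range_inj {α β : Type*} [Finite α] (f : α → β) (hf : Function.Injective f) :
    (Set.range f).ncard = Nat.card α := by
  rw [← Nat.card_coe_set_eq, Nat.card_range_of_injective hf]

end Aux

/-- Every vertex of `𝒢` has odd degree; specifically,
`deg_𝒢(v) = deg_𝒢(w_v) = 2·deg_G(v) + 1` for `v ∈ V`, the vertices of `𝒳`
and `g₁, g₂` have degree `1`, the vertices of `𝒴` have degree `3`, and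
`deg_𝒢(z₁) = deg_𝒢(z₂) = 2·|E| + 1`. -/
theorem stmt19 {V : Type*} [Fintype V] (G : SimpleGraph V) :
    (∀ a : CalV G, Odd (((CalG G).neighborSet a).ncard)) ∧
    (∀ v : V, ((CalG G).neighborSet (CalV.orig v)).ncard = 2 * deg G v + 1) ∧
    (∀ v : V, ((CalG G).neighborSet (CalV.w v)).ncard = 2 * deg G v + 1) ∧
    (∀ (v : V) (i : Fin (deg G v)),
      ((CalG G).neighborSet (CalV.x v i)).ncard = 1) ∧
    (((CalG G).neighborSet CalV.g1).ncard = 1) ∧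
    (((CalG G).neighborSet CalV.g2).ncard = 1) ∧
    (∀ (v : V) (i : Fin (deg G v)),
      ((CalG G).neighborSet (CalV.y v i)).ncard = 3) ∧
    (((CalG G).neighborSet CalV.z1).ncard = 2 * G.edgeSet.ncard + 1) ∧
    (((CalG G).neighborSet CalV.z2).ncard = 2 * G.edgeSet.ncard + 1) := by
  classical
  have hxinj : ∀ v : V, Function.Injective fun i : Fin (deg G v) => (CalV.x v i : CalV G) := by
    intro v i j h
    simpa using h
  have hyinj : ∀ v : V, Function.Injective fun i : Fin (deg G v) => (CalV.y v i : CalV G) := by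
    intro v i j h
    simpa using h
  have hysig : Function.Injective fun p : Σ v : V, Fin (deg G v) => (CalV.y p.1 p.2 : CalV G) := by
    rintro ⟨v, i⟩ ⟨u, j⟩ h
    simp only [CalV.y.injEq] at h
    obtain ⟨rfl, h⟩ := h
    rw [heq_eq_eq] at h
    subst h
    rfl
  have hwinj : Function.Injective (CalV.w (G := G)) := fun a b h => by simpa using h
  have hoinj : Function.Injective (CalV.orig (G := G)) := fun a b h => by simpa using h
  have hclosed : ∀ v : V, ({u | closedNbr G u v}).ncard = deg G v + 1 ∧
      ({u | closedNbr G v u}).ncard = deg G v + 1 := by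
    intro v
    have h1 : (insert v (G.neighborSet v)).ncard = deg G v + 1 :=
      Set.ncard_insert_of_notMem (by simp) (Set.toFinite _)
    rw [closed_set_left, closed_set_right]
    exact ⟨h1, h1⟩
  have horig : ∀ v : V, ((CalG G).neighborSet (CalV.orig v)).ncard = 2 * deg G v + 1 := by
    intro v
    have hdisj : Disjoint (Set.range fun i : Fin (deg G v) => (CalV.x v i : CalV G))
        (CalV.w '' {u | closedNbr G u v}) := by
      rw [Set.disjoint_left]
      rintro a ⟨i, rfl⟩ ⟨u, -, h⟩
      simp at h
    rw [ns_orig, Set.ncard_union_eq hdisj (Set.finite_range _) ((Set.toFinite _).image _),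
      ncard_range_inj _ (hxinj v), Set.ncard_image_of_injective _ hwinj, (hclosed v).1]
    simp [Nat.card_eq_fintype_card]
    ring
  have hw : ∀ v : V, ((CalG G).neighborSet (CalV.w v)).ncard = 2 * deg G v + 1 := by
    intro v
    have hdisj : Disjoint (CalV.orig '' {u | closedNbr G v u})
        (Set.range fun i : Fin (deg G v) => (CalV.y v i : CalV G)) := by
      rw [Set.disjoint_left]
      rintro a ⟨u, -, rfl⟩ ⟨i, h⟩
      simp at h
    rw [ns_w, Set.ncard_union_eq hdisj ((Set.toFinite _).image _) (Set.finite_range _),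
      ncard_range_inj _ (hyinj v), Set.ncard_image_of_injective _ hoinj, (hclosed v).2]
    simp [Nat.card_eq_fintype_card]
    ring
  have hx : ∀ (v : V) (i : Fin (deg G v)),
      ((CalG G).neighborSet (CalV.x v i)).ncard = 1 := by
    intro v i; rw [ns_x, Set.ncard_singleton]
  have hy : ∀ (v : V) (i : Fin (deg G v)),
      ((CalG G).neighborSet (CalV.y v i)).ncard = 3 := by
    intro v i
    rw [ns_y, Set.ncard_insert_of_notMem (by simp) ((Set.finite_singleton _).insert _),
      Set.ncard_insert_of_notMem (by simp) (Set.finite_singleton _), Set.ncard_singleton]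
  have hg1 : ((CalG G).neighborSet CalV.g1).ncard = 1 := by
    rw [ns_g1, Set.ncard_singleton]
  have hg2 : ((CalG G).neighborSet CalV.g2).ncard = 1 := by
    rw [ns_g2, Set.ncard_singleton]
  have hsum : Nat.card (Σ v : V, Fin (deg G v)) = 2 * G.edgeSet.ncard := by
    rw [Nat.card_eq_fintype_card, Fintype.card_sigma]
    have hdeg : ∀ v : V, deg G v = G.degree v := by
      intro v
      rw [deg, Set.ncard_eq_toFinset_card']
      rfl
    simp only [Fintype.card_fin, hdeg]
    rw [G.sum_degrees_eq_twice_card_edges, Set.ncard_eq_toFinset_card']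
    have hef : G.edgeFinset = G.edgeSet.toFinset := by ext; simp
    rw [hef]
  have hz1 : ((CalG G).neighborSet CalV.z1).ncard = 2 * G.edgeSet.ncard + 1 := by
    have hdisj : Disjoint (Set.range fun p : Σ v : V, Fin (deg G v) => (CalV.y p.1 p.2 : CalV G))
        {(CalV.g1 : CalV G)} := by
      rw [Set.disjoint_left]
      rintro a ⟨p, rfl⟩ h
      simp at h
    rw [ns_z1, Set.ncard_union_eq hdisj (Set.finite_range _) (Set.finite_singleton _),
      ncard_range_inj _ hysig, Set.ncard_singleton, hsum]
  have hz2 : ((CalG G).neighborSet CalV.z2).ncard = 2 * G.edgeSet.ncard + 1 := by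
    have hdisj : Disjoint (Set.range fun p : Σ v : V, Fin (deg G v) => (CalV.y p.1 p.2 : CalV G))
        {(CalV.g2 : CalV G)} := by
      rw [Set.disjoint_left]
      rintro a ⟨p, rfl⟩ h
      simp at h
    rw [ns_z2, Set.ncard_union_eq hdisj (Set.finite_range _) (Set.finite_singleton _),
      ncard_range_inj _ hysig, Set.ncard_singleton, hsum]
  refine ⟨?_, horig, hw, hx, hg1, hg2, hy, hz1, hz2⟩
  intro a
  cases a with
  | orig v => rw [horig v]; exact ⟨deg G v, by ring⟩
  | w v => rw [hw v]; exact ⟨deg G v, by ring⟩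
  | x v i => rw [hx v i]; exact odd_one
  | y v i => rw [hy v i]; exact ⟨1, rfl⟩
  | z1 => rw [hz1]; exact ⟨G.edgeSet.ncard, by ring⟩
  | z2 => rw [hz2]; exact ⟨G.edgeSet.ncard, by ring⟩
  | g1 => rw [hg1]; exact odd_one
  | g2 => rw [hg2]; exact odd_one
end
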